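/- Barbalat-type conclusion for the adaptive scalar system: under the hypotheses above with eₜ bounded, e(t) → 0 as t → ∞. -/

import Mathlib

open Filter

set_option maxHeartbeats 1000000 in
/-- Barbalat-type conclusion: the adaptive tracking error converges to zero. -/
theorem stmt_14 (a α γ β Kstar : ℝ) (ha : a < 0) (hα : 0 < α) (hγ : 0 < γ) (hβ : 0 < β)
    (et e K : ℝ → ℝ) (het : Continuous et) (hetb : ∃ Cb, ∀ t, |et t| ≤ Cb)
    (he : ∀ t ≥ 0, HasDerivAt e (a * e t + β * (Kstar - K t) * et t) t)
    (hK : ∀ t ≥ 0, HasDerivAt K (α * γ * e t * et t) t) :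
    Tendsto e atTop (nhds 0) := by
  obtain ⟨Cb, hCb⟩ := hetb
  have hCb0 : 0 ≤ Cb := le_trans (abs_nonneg _) (hCb 0)
  set V : ℝ → ℝ := fun t => α * γ * (e t) ^ 2 + β * (Kstar - K t) ^ 2 with hVdef
  have hV' : ∀ t ≥ (0:ℝ), HasDerivAt V (2*α*γ*a*(e t)^2) t := by
    intro t ht
    have h1 := (((he t ht).pow 2).const_mul (α*γ))
    have h2 := ((((hK t ht).const_sub Kstar).pow 2).const_mul β)
    have h3 := h1.add h2
    exact h3.congr_deriv (by ring)
  have hVnn : ∀ t, 0 ≤ V t := by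
    intro t; simp only [hVdef]; positivity
  have heC : ContinuousOn e (Set.Ici 0) := fun t ht => (he t ht).continuousAt.continuousWithinAt
  have hint : ∀ s t : ℝ, 0 ≤ s → 0 ≤ t →
      IntervalIntegrable (fun u => (e u)^2) MeasureTheory.volume s t := by
    intro s t hs ht
    apply (((heC.mono ?_).pow 2)).intervalIntegrable
    intro x hx
    exact le_trans (le_min hs ht) hx.1
  have hFTC : ∀ t ≥ (0:ℝ), V t - V 0 = (2*α*γ*a) * ∫ u in (0:ℝ)..t, (e u)^2 := by
    intro t ht
    rw [← intervalIntegral.integral_const_mul]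
    refine (intervalIntegral.integral_eq_sub_of_hasDerivAt (fun u hu => hV' u ?_) ?_).symm
    · rw [Set.uIcc_of_le ht] at hu; exact hu.1
    · exact ((hint 0 t le_rfl ht).const_mul _)
  have hag : 0 < α * γ := mul_pos hα hγ
  have hVle : ∀ t ≥ (0:ℝ), V t ≤ V 0 := by
    intro t ht
    have h := hFTC t ht
    have hI : 0 ≤ ∫ u in (0:ℝ)..t, (e u)^2 :=
      intervalIntegral.integral_nonneg ht (fun u _ => sq_nonneg _)
    have hc2 : 2*α*γ*a ≤ 0 := by nlinarith
    have := mul_nonpos_iff.mpr (Or.inr ⟨hc2, hI⟩)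
    linarith
  set M := Real.sqrt (V 0 / (α*γ)) with hMdef
  have hM : ∀ t ≥ (0:ℝ), |e t| ≤ M := by
    intro t ht
    have h1 : (e t)^2 ≤ V 0 / (α*γ) := by
      rw [le_div_iff₀ hag]
      have hv := hVle t ht
      have hVt : V t = α*γ*(e t)^2 + β*(Kstar - K t)^2 := rfl
      nlinarith [mul_nonneg hβ.le (sq_nonneg (Kstar - K t)), hVt, hv]
    calc |e t| = Real.sqrt ((e t)^2) := (Real.sqrt_sq_eq_abs _).symm
    _ ≤ M := Real.sqrt_le_sqrt h1
  set MK := Real.sqrt (V 0 / β) with hMKdef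
  have hMK : ∀ t ≥ (0:ℝ), |Kstar - K t| ≤ MK := by
    intro t ht
    have h1 : (Kstar - K t)^2 ≤ V 0 / β := by
      rw [le_div_iff₀ hβ]
      have hv := hVle t ht
      have hVt : V t = α*γ*(e t)^2 + β*(Kstar - K t)^2 := rfl
      nlinarith [mul_nonneg hag.le (sq_nonneg (e t)), hVt, hv]
    calc |Kstar - K t| = Real.sqrt ((Kstar - K t)^2) := (Real.sqrt_sq_eq_abs _).symm
    _ ≤ MK := Real.sqrt_le_sqrt h1
  set L : ℝ := |a| * M + β * MK * Cb + 1 with hLdef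
  have hM0 : 0 ≤ M := Real.sqrt_nonneg _
  have hMK0 : 0 ≤ MK := Real.sqrt_nonneg _
  have hL0 : 0 < L := by
    have h1 : 0 ≤ |a| * M := mul_nonneg (abs_nonneg _) hM0
    have h2 : 0 ≤ β * MK * Cb := mul_nonneg (mul_nonneg hβ.le hMK0) hCb0
    linarith
  have hbound : ∀ u ∈ Set.Ici (0:ℝ), ‖a * e u + β * (Kstar - K u) * et u‖ ≤ L := by
    intro u hu
    have h1 : |a * e u| ≤ |a| * M := by
      rw [abs_mul]; exact mul_le_mul_of_nonneg_left (hM u hu) (abs_nonneg _)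
    have h2 : |β * (Kstar - K u) * et u| ≤ β * MK * Cb := by
      rw [abs_mul, abs_mul, abs_of_pos hβ]
      calc β * |Kstar - K u| * |et u| ≤ (β * MK) * Cb :=
            mul_le_mul (mul_le_mul_of_nonneg_left (hMK u hu) hβ.le) (hCb u)
              (abs_nonneg _) (by positivity)
      _ = β * MK * Cb := by ring
    calc ‖a * e u + β * (Kstar - K u) * et u‖
        ≤ |a * e u| + |β * (Kstar - K u) * et u| := abs_add_le _ _
    _ ≤ L := by linarith
  have hLip : ∀ s t : ℝ, 0 ≤ s → s ≤ t → |e t - e s| ≤ L * (t - s) := by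
    intro s t hs hst
    have ht0 : (0:ℝ) ≤ t := le_trans hs hst
    have := (convex_Ici (0:ℝ)).norm_image_sub_le_of_norm_hasDerivWithin_le
      (f' := fun u => a * e u + β * (Kstar - K u) * et u)
      (fun u hu => (he u hu).hasDerivWithinAt) hbound ht0 hs
    -- this : ‖e s - e t‖ ≤ L * ‖s - t‖ ??? check orientation
    rw [Real.norm_eq_abs, Real.norm_eq_abs] at this
    calc |e t - e s| = |e s - e t| := abs_sub_comm _ _
    _ ≤ L * |s - t| := this
    _ = L * (t - s) := by rw [abs_sub_comm, abs_of_nonneg (by linarith)]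
  set C := V 0 / (2*α*γ*(-a)) with hCdef
  have hden : 0 < 2*α*γ*(-a) := by nlinarith
  set F : ℝ → ℝ := fun T => ∫ u in (0:ℝ)..T, (e u)^2 with hFdef
  have hFbound : ∀ T ≥ (0:ℝ), F T ≤ C := by
    intro T hT
    have h := hFTC T hT
    have hVT := hVnn T
    rw [hCdef, le_div_iff₀ hden]
    nlinarith
  have hFadd : ∀ s t : ℝ, 0 ≤ s → s ≤ t →
      F t = F s + ∫ u in s..t, (e u)^2 := by
    intro s t hs hst
    have := intervalIntegral.integral_add_adjacent_intervals
      (hint 0 s le_rfl hs) (hint s t hs (le_trans hs hst))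
    simp only [hFdef]
    linarith [this]
  have hFmono : ∀ s t : ℝ, 0 ≤ s → s ≤ t → F s ≤ F t := by
    intro s t hs hst
    rw [hFadd s t hs hst]
    have : 0 ≤ ∫ u in s..t, (e u)^2 :=
      intervalIntegral.integral_nonneg hst (fun u _ => sq_nonneg _)
    linarith
  have hne : (F '' Set.Ici 0).Nonempty := ⟨F 0, 0, Set.self_mem_Ici, rfl⟩
  have hBdd : BddAbove (F '' Set.Ici 0) := by
    refine ⟨C, ?_⟩
    rintro x ⟨T, hT, rfl⟩
    exact hFbound T hT
  set Sl := sSup (F '' Set.Ici 0) with hSldef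
  rw [Metric.tendsto_atTop]
  intro ε hε
  set δ := ε / (2*L) with hδdef
  have hδpos : 0 < δ := div_pos hε (by linarith)
  have hε'pos : 0 < δ * ε^2 / 4 := by positivity
  obtain ⟨x, hx, hxlt⟩ := exists_lt_of_lt_csSup hne
    (show Sl - δ * ε^2 / 4 < Sl by linarith)
  obtain ⟨T₀, hT₀, rfl⟩ := hx
  refine ⟨T₀, fun t htT => ?_⟩
  rw [Real.dist_eq, sub_zero]
  by_contra hc
  push_neg at hc
  have ht0 : (0:ℝ) ≤ t := le_trans hT₀ htT
  -- pointwise lower bound on [t, t+δ]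
  have hpt : ∀ s ∈ Set.Icc t (t+δ), (ε/2)^2 ≤ (e s)^2 := by
    intro s hs
    have h1 : |e s - e t| ≤ L * (s - t) := hLip t s ht0 hs.1
    have h2 : L * (s - t) ≤ L * δ := mul_le_mul_of_nonneg_left (by linarith [hs.2]) hL0.le
    have h3 : L * δ = ε / 2 := by
      rw [hδdef]; field_simp
    have h4 : ε / 2 ≤ |e s| := by
      have := abs_sub_abs_le_abs_sub (e t) (e s)
      rw [abs_sub_comm (e t) (e s)] at this
      nlinarith
    calc (ε/2)^2 ≤ |e s|^2 := by
          apply pow_le_pow_left₀ (by linarith) h4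
    _ = (e s)^2 := sq_abs _
  have hlow : δ * ε^2 / 4 ≤ ∫ u in t..(t+δ), (e u)^2 := by
    have hconst : (∫ u in t..(t+δ), (ε/2)^2) = δ * (ε/2)^2 := by
      rw [intervalIntegral.integral_const]
      simp [smul_eq_mul]
    have hmono := intervalIntegral.integral_mono_on (by linarith : t ≤ t + δ)
      (intervalIntegrable_const) (hint t (t+δ) ht0 (by linarith)) hpt
    rw [hconst] at hmono
    nlinarith
  have hup : F (t+δ) ≤ Sl := le_csSup hBdd ⟨t+δ, by simp; linarith, rfl⟩
  have hFt : F T₀ ≤ F t := hFmono T₀ t hT₀ htT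
  have heq := hFadd t (t+δ) ht0 (by linarith)
  linarith only [hup, hxlt, hFt, heq, hlow]
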